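/- Let u: [0,T] → ℝ be differentiable satisfying u'(t) + u(t)²/n + nκ ≤ 0 with κ > 0. Then u(t) ≤ n√κ · (u(0)/(n√κ) − tan(√κ t)) / (1 + (u(0)/(n√κ)) tan(√κ t)) for t such that the denominator is positive. -/

import Mathlib

open Real Set

private lemma tan_sub_formula (a b : ℝ) (ha : Real.cos a ≠ 0) (hb : Real.cos b ≠ 0)
    (h : 1 + Real.tan a * Real.tan b ≠ 0) :
    Real.tan (a - b) = (Real.tan a - Real.tan b) / (1 + Real.tan a * Real.tan b) := by
  have hc : Real.cos (a - b) = Real.cos a * Real.cos b * (1 + Real.tan a * Real.tan b) := by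
    rw [Real.cos_sub, Real.tan_eq_sin_div_cos, Real.tan_eq_sin_div_cos]
    field_simp
  rw [Real.tan_eq_sin_div_cos, Real.sin_sub, hc, Real.tan_eq_sin_div_cos,
    Real.tan_eq_sin_div_cos]
  field_simp

theorem riccati_comparison_ricci
    (n κ T : ℝ) (hn : 1 ≤ n) (hκ : 0 < κ) (hT : 0 ≤ T)
    (u u' : ℝ → ℝ)
    (hderiv : ∀ t ∈ Set.Icc 0 T, HasDerivAt u (u' t) t)
    (hineq : ∀ t ∈ Set.Icc 0 T, u' t + (u t) ^ 2 / n + n * κ ≤ 0) :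
    ∀ t ∈ Set.Icc 0 T, Real.sqrt κ * t < π / 2 →
      0 < 1 + (u 0 / (n * Real.sqrt κ)) * Real.tan (Real.sqrt κ * t) →
      u t ≤ n * Real.sqrt κ *
        (u 0 / (n * Real.sqrt κ) - Real.tan (Real.sqrt κ * t)) /
          (1 + (u 0 / (n * Real.sqrt κ)) * Real.tan (Real.sqrt κ * t)) := by
  intro t ht hlt hden
  have hn0 : (0 : ℝ) < n := lt_of_lt_of_le zero_lt_one hn
  have hsκ : 0 < Real.sqrt κ := Real.sqrt_pos.2 hκ
  set c : ℝ := n * Real.sqrt κ with hc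
  have hc0 : 0 < c := mul_pos hn0 hsκ
  -- v t = arctan (u t / c)
  set v : ℝ → ℝ := fun s => Real.arctan (u s / c) + Real.sqrt κ * s with hv
  -- derivative of v
  have hvd : ∀ s ∈ Set.Icc 0 T,
      HasDerivAt v (1 / (1 + (u s / c) ^ 2) * (u' s / c) + Real.sqrt κ) s := by
    intro s hs
    have h1 : HasDerivAt (fun s => u s / c) (u' s / c) s := (hderiv s hs).div_const c
    have h2 : HasDerivAt (fun s => Real.arctan (u s / c))
        (1 / (1 + (u s / c) ^ 2) * (u' s / c)) s :=
      by have := (Real.hasDerivAt_arctan (u s / c)).comp s h1; exact this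
    have h3 := h2.add ((hasDerivAt_id s).const_mul (Real.sqrt κ)); rw [mul_one] at h3; exact h3
  -- derivative nonpositive
  have hvd0 : ∀ s ∈ Set.Icc 0 T,
      1 / (1 + (u s / c) ^ 2) * (u' s / c) + Real.sqrt κ ≤ 0 := by
    intro s hs
    have hq : 0 < 1 + (u s / c) ^ 2 := by positivity
    have key : u' s ≤ -(n * κ * (1 + (u s / c) ^ 2)) := by
      have := hineq s hs
      have hexp : n * κ * (1 + (u s / c) ^ 2) = n * κ + (u s) ^ 2 / n := by
        have hcsq : c ^ 2 = n ^ 2 * κ := by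
          rw [hc, mul_pow, Real.sq_sqrt hκ.le]
        have hq2 : (u s / c) ^ 2 = u s ^ 2 / (n ^ 2 * κ) := by
          rw [div_pow, hcsq]
        rw [hq2]; field_simp
      rw [hexp]; linarith
    have h1 : 1 / (1 + (u s / c) ^ 2) * (u' s / c)
        ≤ 1 / (1 + (u s / c) ^ 2) * (-(n * κ * (1 + (u s / c) ^ 2)) / c) := by
      apply mul_le_mul_of_nonneg_left _ (by positivity)
      exact div_le_div_of_nonneg_right key hc0.le
    have h2 : 1 / (1 + (u s / c) ^ 2) * (-(n * κ * (1 + (u s / c) ^ 2)) / c)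
        = -Real.sqrt κ := by
      have hκeq : Real.sqrt κ * Real.sqrt κ = κ := Real.mul_self_sqrt hκ.le
      have key2 : -(n * κ * (1 + (u s / c) ^ 2))
          = (-Real.sqrt κ * (1 + (u s / c) ^ 2)) * c := by
        rw [hc]; linear_combination (n * (1 + (u s / c) ^ 2)) * hκeq
      rw [key2]
      field_simp
    linarith [h1.trans_eq h2]
  -- v is antitone on Icc 0 T
  have hanti : AntitoneOn v (Set.Icc 0 T) := by
    apply antitoneOn_of_deriv_nonpos (convex_Icc 0 T)
    · intro s hs; exact (hvd s hs).continuousAt.continuousWithinAt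
    · intro s hs
      rw [interior_Icc] at hs
      exact ((hvd s (Ioo_subset_Icc_self hs)).differentiableAt).differentiableWithinAt
    · intro s hs
      rw [interior_Icc] at hs
      rw [(hvd s (Ioo_subset_Icc_self hs)).deriv]
      exact hvd0 s (Ioo_subset_Icc_self hs)
  have h0mem : (0 : ℝ) ∈ Set.Icc 0 T := ⟨le_refl 0, hT⟩
  have ht0 : 0 ≤ t := ht.1
  have hvt : v t ≤ v 0 := hanti h0mem ht ht0
  -- i.e. arctan (u t / c) ≤ arctan (u 0 / c) - √κ t
  have hkey : Real.arctan (u t / c) ≤ Real.arctan (u 0 / c) - Real.sqrt κ * t := by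
    simp only [hv] at hvt
    simp at hvt
    linarith
  set a : ℝ := Real.arctan (u 0 / c) with ha
  set b : ℝ := Real.sqrt κ * t with hb
  have hb0 : 0 ≤ b := mul_nonneg hsκ.le ht0
  have haI : a ∈ Set.Ioo (-(π/2)) (π/2) := ⟨Real.neg_pi_div_two_lt_arctan _, Real.arctan_lt_pi_div_two _⟩
  have habI : a - b ∈ Set.Ioo (-(π/2)) (π/2) := by
    constructor
    · calc -(π/2) < Real.arctan (u t / c) := Real.neg_pi_div_two_lt_arctan _
        _ ≤ a - b := hkey
    · calc a - b ≤ a := by linarith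
        _ < π/2 := haI.2
  -- tan monotone
  have htanmono : Real.tan (Real.arctan (u t / c)) ≤ Real.tan (a - b) := by
    rcases eq_or_lt_of_le hkey with h | h
    · rw [h]
    · exact le_of_lt (Real.strictMonoOn_tan
        ⟨Real.neg_pi_div_two_lt_arctan _, Real.arctan_lt_pi_div_two _⟩ habI h)
  rw [Real.tan_arctan] at htanmono
  -- tan subtraction formula
  have hta : Real.tan a = u 0 / c := Real.tan_arctan _
  have hcosa : Real.cos a ≠ 0 := (Real.cos_pos_of_mem_Ioo haI).ne'
  have hcosb : Real.cos b ≠ 0 := by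
    apply (Real.cos_pos_of_mem_Ioo ⟨_, hlt⟩).ne'
    linarith [Real.pi_div_two_pos]
  have hden' : 1 + Real.tan a * Real.tan b ≠ 0 := by
    rw [hta]; exact hden.ne'
  have hsub : Real.tan (a - b) = (u 0 / c - Real.tan b) / (1 + u 0 / c * Real.tan b) := by
    rw [tan_sub_formula a b hcosa hcosb hden', hta]
  -- conclude
  have : u t / c ≤ (u 0 / c - Real.tan b) / (1 + u 0 / c * Real.tan b) := by
    rw [← hsub]; exact htanmono
  calc u t = c * (u t / c) := by field_simp
    _ ≤ c * ((u 0 / c - Real.tan b) / (1 + u 0 / c * Real.tan b)) := by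
        exact mul_le_mul_of_nonneg_left this hc0.le
    _ = c * (u 0 / c - Real.tan b) / (1 + u 0 / c * Real.tan b) := by ring
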